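/- Let G ∈ 𝒦_{n,d} with ω(G) ≥ 3. Then G has an edge subgraph H ∈ 𝒦_{n,d} with |E(H)| = n(n−1)/2 + 2d and ω(H) = ω(G). -/

import Mathlib

open BigOperators

/-- `G ∈ 𝒦_{n,d}`: obtained from `K_n` by 2-stretching `d` of its vertices (see the
structural characterization via association classes). -/
def IsStretchedClique {W : Type} [Fintype W] (n d : ℕ) (G : SimpleGraph W) : Prop :=
  ∃ (φ : W → Fin n) (c : Fin n → W) (D : Finset (Fin n)),
    D.card = d ∧
    Function.Surjective φ ∧
    (∀ i ∉ D, ∀ u v : W, φ u = i → φ v = i → u = v) ∧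
    (∀ i ∈ D, φ (c i) = i) ∧
    (∀ i ∈ D, (Finset.univ.filter fun w : W => φ w = i).card = 3) ∧
    (∀ i ∈ D, ∀ w : W, G.Adj (c i) w ↔ (φ w = i ∧ w ≠ c i)) ∧
    (∀ u v : W, φ u = φ v → G.Adj u v → (u = c (φ u) ∨ v = c (φ u))) ∧
    (∀ i j : Fin n, i ≠ j → ∃ u v : W, φ u = i ∧ φ v = j ∧ G.Adj u v)

/-- The clique number `ω(G)`. -/
noncomputable def cliqueNum {W : Type} (G : SimpleGraph W) : ℕ :=
  sSup {k | ∃ S : Finset W, G.IsNClique k S}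

/-- Number of ordered pairs `(i,j)` with `i < j` in `Fin n`. -/
lemma card_lt_pairs (n : ℕ) :
    (Finset.univ.filter fun q : Fin n × Fin n => q.1 < q.2).card = n * (n - 1) / 2 := by
  classical
  set L := (Finset.univ.filter fun q : Fin n × Fin n => q.1 < q.2) with hL
  set Gt := (Finset.univ.filter fun q : Fin n × Fin n => q.2 < q.1) with hGt
  have hbij : L.card = Gt.card := by
    apply Finset.card_bij (fun q _ => (q.2, q.1))
    · intro q hq
      simp only [hGt, Finset.mem_filter, Finset.mem_univ, true_and]
      simpa [hL, Finset.mem_filter] using hq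
    · intro a ha b hb h
      simp only [Prod.mk.injEq] at h
      exact Prod.ext h.2 h.1
    · intro q hq
      refine ⟨(q.2, q.1), ?_, rfl⟩
      simp only [hL, Finset.mem_filter, Finset.mem_univ, true_and]
      simpa [hGt, Finset.mem_filter] using hq
  have hunion : (Finset.univ : Finset (Fin n)).offDiag = L ∪ Gt := by
    ext q
    simp only [Finset.mem_offDiag, Finset.mem_union, hL, hGt, Finset.mem_filter,
      Finset.mem_univ, true_and]
    constructor
    · intro h; exact lt_or_gt_of_ne h
    · rintro (h | h) <;> omega
  have hdisj : Disjoint L Gt := by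
    rw [Finset.disjoint_left]
    intro q hq hq'
    simp only [hL, hGt, Finset.mem_filter] at hq hq'
    exact absurd hq'.2 (not_lt_of_gt hq.2)
  have hcard : n * n - n = 2 * L.card := by
    have := Finset.offDiag_card (Finset.univ : Finset (Fin n))
    rw [hunion, Finset.card_union_of_disjoint hdisj, ← hbij] at this
    simp only [Finset.card_univ, Fintype.card_prod, Fintype.card_fin] at this
    omega
  have hnn : n * n - n = n * (n - 1) := by
    cases n with
    | zero => simp
    | succ m => simp [Nat.succ_mul, Nat.mul_succ]
  omega

/-- if `G ∈ 𝒦_{n,d}` has `ω(G) ≥ 3`, then `G` has an edge subgraph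
`H ∈ 𝒦_{n,d}` with `|E(H)| = n(n−1)/2 + 2d` and `ω(H) = ω(G)`. -/
theorem stmt_11 {W : Type} [Fintype W] (n d : ℕ) (G : SimpleGraph W)
    (hG : IsStretchedClique n d G) (hω : 3 ≤ cliqueNum G) :
    ∃ H : SimpleGraph W, H ≤ G ∧ IsStretchedClique n d H ∧
      H.edgeSet.ncard = n * (n - 1) / 2 + 2 * d ∧ cliqueNum H = cliqueNum G := by
  classical
  obtain ⟨φ, c, D, hD, hsurj, hinj, hcD, hcard3, hcadj, hwithin, hcross⟩ := hG
  -- a maximum clique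
  have hcn : cliqueNum G = G.cliqueNum := rfl
  obtain ⟨S, hS⟩ := G.exists_isNClique_cliqueNum
  rw [← hcn] at hS
  have hS3 : 3 ≤ S.card := by rw [hS.2]; exact hω
  -- φ is injective on S
  have hSinj : ∀ u ∈ S, ∀ v ∈ S, φ u = φ v → u = v := by
    intro u hu v hv huv
    by_contra hne
    have hadj : G.Adj u v := hS.1 hu hv hne
    have hiD : φ u ∈ D := by
      by_contra hiD
      exact hne (hinj (φ u) hiD u v rfl huv.symm)
    have h2 : ({u, v} : Finset W).card < S.card := by
      calc ({u, v} : Finset W).card ≤ 2 := Finset.card_insert_le _ _ |>.trans (by simp)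
        _ < 3 := by omega
        _ ≤ S.card := hS3
    have hns : ¬ S ⊆ ({u, v} : Finset W) := fun hsub => absurd (Finset.card_le_card hsub) (by omega)
    obtain ⟨w, hwS, hw⟩ := Finset.not_subset.1 hns
    simp only [Finset.mem_insert, Finset.mem_singleton, not_or] at hw
    obtain ⟨hwu, hwv⟩ := hw
    have hadjuw : G.Adj u w := hS.1 hu hwS (fun h => hwu h.symm)
    have hadjvw : G.Adj v w := hS.1 hv hwS (fun h => hwv h.symm)
    rcases hwithin u v huv hadj with hu' | hv'
    · have hcw : φ w = φ u ∧ w ≠ c (φ u) := (hcadj (φ u) hiD w).1 (hu' ▸ hadjuw)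
      have hvw : φ v = φ w := huv.symm.trans hcw.1.symm
      rcases hwithin v w hvw hadjvw with h | h
      · have h' : v = c (φ u) := by rw [huv]; exact h
        exact hne (hu'.trans h'.symm)
      · have h' : w = c (φ u) := by rw [huv]; exact h
        exact hcw.2 h'
    · have hadjvw' : G.Adj (c (φ u)) w := hv' ▸ hadjvw
      have hcw : φ w = φ u ∧ w ≠ c (φ u) := (hcadj (φ u) hiD w).1 hadjvw'
      rcases hwithin u w hcw.1.symm hadjuw with h | h
      · exact hne (h.trans hv'.symm)
      · exact hcw.2 h
  -- W is nonempty (S has ≥ 3 elements)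
  obtain ⟨w₀, hw₀⟩ := Finset.card_pos.1 (by omega : 0 < S.card)
  -- choose an edge for each pair of classes, preferring edges inside S
  have hpick : ∀ i j : Fin n, ∃ p : W × W, i ≠ j →
      (φ p.1 = i ∧ φ p.2 = j ∧ G.Adj p.1 p.2 ∧
        (((∃ u ∈ S, φ u = i) ∧ (∃ v ∈ S, φ v = j)) → (p.1 ∈ S ∧ p.2 ∈ S))) := by
    intro i j
    by_cases hij : i = j
    · exact ⟨(w₀, w₀), fun h => absurd hij h⟩
    · by_cases hrep : (∃ u ∈ S, φ u = i) ∧ (∃ v ∈ S, φ v = j)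
      · obtain ⟨⟨u, hu, hui⟩, ⟨v, hv, hvj⟩⟩ := hrep
        have huv : u ≠ v := fun h => hij (hui ▸ hvj ▸ h ▸ rfl)
        exact ⟨(u, v), fun _ => ⟨hui, hvj, hS.1 hu hv huv, fun _ => ⟨hu, hv⟩⟩⟩
      · obtain ⟨u, v, hui, hvj, hadj⟩ := hcross i j hij
        exact ⟨(u, v), fun _ => ⟨hui, hvj, hadj, fun h => absurd h hrep⟩⟩
  choose f hf using hpick
  -- the subgraph H
  let H : SimpleGraph W :=
    { Adj := fun u v => G.Adj u v ∧ (φ u = φ v ∨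
        (φ u < φ v ∧ (u, v) = f (φ u) (φ v)) ∨ (φ v < φ u ∧ (v, u) = f (φ v) (φ u))),
      symm := by
        refine ⟨fun u v h => ?_⟩
        refine ⟨h.1.symm, ?_⟩
        rcases h.2 with h | h | h
        · exact Or.inl h.symm
        · exact Or.inr (Or.inr h)
        · exact Or.inr (Or.inl h)
      loopless := ⟨fun u h => G.irrefl h.1⟩ }
  have hHG : H ≤ G := fun u v h => h.1
  have hHadj : ∀ u v : W, H.Adj u v ↔ (G.Adj u v ∧ (φ u = φ v ∨
      (φ u < φ v ∧ (u, v) = f (φ u) (φ v)) ∨ (φ v < φ u ∧ (v, u) = f (φ v) (φ u)))) :=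
    fun u v => Iff.rfl
  refine ⟨H, hHG, ?_, ?_, ?_⟩
  · -- H is a stretched clique
    refine ⟨φ, c, D, hD, hsurj, hinj, hcD, hcard3, ?_, ?_, ?_⟩
    · intro i hi w
      constructor
      · intro h; exact (hcadj i hi w).1 h.1
      · intro h
        refine ⟨(hcadj i hi w).2 h, Or.inl ?_⟩
        rw [hcD i hi, h.1]
    · intro u v huv hadj
      exact hwithin u v huv hadj.1
    · intro i j hij
      obtain ⟨h1, h2, h3, _⟩ := hf i j hij
      rcases lt_trichotomy i j with hlt | heq | hgt
      · refine ⟨(f i j).1, (f i j).2, h1, h2, h3, Or.inr (Or.inl ?_)⟩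
        rw [h1, h2]
        exact ⟨hlt, rfl⟩
      · exact absurd heq hij
      · obtain ⟨g1, g2, g3, _⟩ := hf j i (Ne.symm hij)
        refine ⟨(f j i).2, (f j i).1, g2, g1, ?_⟩
        refine ⟨g3.symm, Or.inr (Or.inr ?_)⟩
        rw [g1, g2]
        exact ⟨hgt, rfl⟩
  · -- edge count
    have hiDofAdj : ∀ u v : W, G.Adj u v → φ u = φ v → φ u ∈ D := by
      intro u v hadj heq
      by_contra hiD
      exact hadj.ne (hinj (φ u) hiD u v rfl heq.symm)
    set Fcr : Finset (Sym2 W) := (Finset.univ.filter fun q : Fin n × Fin n => q.1 < q.2).image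
      (fun q => s((f q.1 q.2).1, (f q.1 q.2).2)) with hFcr
    set FinE : Finset (Sym2 W) := D.biUnion (fun i =>
      ((Finset.univ.filter fun w : W => φ w = i).erase (c i)).image (fun x => s(c i, x)))
      with hFinE
    have hmemFin : ∀ i ∈ D, ∀ x : W, φ x = i → x ≠ c i → s(c i, x) ∈ FinE := by
      intro i hi x hx hxc
      rw [hFinE, Finset.mem_biUnion]
      exact ⟨i, hi, Finset.mem_image.2 ⟨x, Finset.mem_erase.2
        ⟨hxc, Finset.mem_filter.2 ⟨Finset.mem_univ _, hx⟩⟩, rfl⟩⟩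
    have hedge : H.edgeSet = ↑(FinE ∪ Fcr) := by
      ext e
      induction e using Sym2.ind with
      | _ u v =>
        simp only [SimpleGraph.mem_edgeSet, Finset.coe_union, Set.mem_union,
          Finset.mem_coe]
        constructor
        · rintro ⟨hadj, hcase⟩
          rcases hcase with heq | ⟨hlt, hfe⟩ | ⟨hlt, hfe⟩
          · left
            have hiD : φ u ∈ D := hiDofAdj u v hadj heq
            rcases hwithin u v heq hadj with h | h
            · have h1 : s(u, v) = s(c (φ u), v) := by rw [← h]
              rw [h1]
              exact hmemFin (φ u) hiD v heq.symm (fun hh => hadj.ne' (hh.trans h.symm))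
            · have h1 : s(u, v) = s(c (φ u), u) := by rw [← h, Sym2.eq_swap]
              rw [h1]
              exact hmemFin (φ u) hiD u rfl (fun hh => hadj.ne (hh.trans h.symm))
          · right
            rw [hFcr, Finset.mem_image]
            refine ⟨(φ u, φ v), Finset.mem_filter.2 ⟨Finset.mem_univ _, hlt⟩, ?_⟩
            rw [← hfe]
          · right
            rw [hFcr, Finset.mem_image]
            refine ⟨(φ v, φ u), Finset.mem_filter.2 ⟨Finset.mem_univ _, hlt⟩, ?_⟩
            rw [← hfe, Sym2.eq_swap]
        · rintro (hmem | hmem)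
          · rw [hFinE, Finset.mem_biUnion] at hmem
            obtain ⟨i, hi, hmem⟩ := hmem
            rw [Finset.mem_image] at hmem
            obtain ⟨x, hx, hex⟩ := hmem
            rw [Finset.mem_erase, Finset.mem_filter] at hx
            have hadj : H.Adj (c i) x :=
              ⟨(hcadj i hi x).2 ⟨hx.2.2, hx.1⟩, Or.inl (by rw [hcD i hi, hx.2.2])⟩
            rcases Sym2.eq_iff.1 hex with ⟨h1, h2⟩ | ⟨h1, h2⟩
            · rw [← h1, ← h2]; exact hadj
            · rw [← h1, ← h2]; exact hadj.symm
          · rw [hFcr, Finset.mem_image] at hmem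
            obtain ⟨q, hq, hex⟩ := hmem
            rw [Finset.mem_filter] at hq
            have hij : q.1 ≠ q.2 := ne_of_lt hq.2
            obtain ⟨h1, h2, h3, _⟩ := hf q.1 q.2 hij
            have hadj : H.Adj (f q.1 q.2).1 (f q.1 q.2).2 := by
              refine ⟨h3, Or.inr (Or.inl ⟨?_, ?_⟩)⟩
              · rw [h1, h2]; exact hq.2
              · rw [h1, h2]
            rcases Sym2.eq_iff.1 hex with ⟨e1, e2⟩ | ⟨e1, e2⟩
            · rw [← e1, ← e2]; exact hadj
            · rw [← e1, ← e2]; exact hadj.symm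
    have hdisj : Disjoint FinE Fcr := by
      rw [Finset.disjoint_left]
      intro e he he'
      rw [hFinE, Finset.mem_biUnion] at he
      obtain ⟨i, hi, he⟩ := he
      rw [Finset.mem_image] at he
      obtain ⟨x, hx, hex⟩ := he
      rw [Finset.mem_erase, Finset.mem_filter] at hx
      rw [hFcr, Finset.mem_image] at he'
      obtain ⟨q, hq, heq⟩ := he'
      rw [Finset.mem_filter] at hq
      have hij : q.1 ≠ q.2 := ne_of_lt hq.2
      obtain ⟨h1, h2, -, -⟩ := hf q.1 q.2 hij
      have hcx : s(c i, x) = s((f q.1 q.2).1, (f q.1 q.2).2) := hex.symm ▸ heq.symm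
      rcases Sym2.eq_iff.1 hcx with ⟨e1, e2⟩ | ⟨e1, e2⟩
      · have a1 : q.1 = i := by rw [← h1, ← e1, hcD i hi]
        have a2 : q.2 = i := by rw [← h2, ← e2, hx.2.2]
        exact hij (a1.trans a2.symm)
      · have a1 : q.2 = i := by rw [← h2, ← e1, hcD i hi]
        have a2 : q.1 = i := by rw [← h1, ← e2, hx.2.2]
        exact hij (a2.trans a1.symm)
    have hcardFcr : Fcr.card = n * (n - 1) / 2 := by
      have hinj' : Set.InjOn (fun q : Fin n × Fin n => s((f q.1 q.2).1, (f q.1 q.2).2))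
          ↑(Finset.univ.filter fun q : Fin n × Fin n => q.1 < q.2) := by
        intro q hq q' hq' hee
        rw [Finset.mem_coe, Finset.mem_filter] at hq hq'
        obtain ⟨h1, h2, -, -⟩ := hf q.1 q.2 (ne_of_lt hq.2)
        obtain ⟨h1', h2', -, -⟩ := hf q'.1 q'.2 (ne_of_lt hq'.2)
        rcases Sym2.eq_iff.1 hee with ⟨e1, e2⟩ | ⟨e1, e2⟩
        · have g1 : q.1 = q'.1 := by rw [← h1, ← h1', e1]
          have g2 : q.2 = q'.2 := by rw [← h2, ← h2', e2]
          exact Prod.ext g1 g2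
        · have g1 : q.1 = q'.2 := by rw [← h1, ← h2', e1]
          have g2 : q.2 = q'.1 := by rw [← h2, ← h1', e2]
          exfalso
          have l1 := hq.2
          have l2 := hq'.2
          rw [g1, g2] at l1
          exact absurd l1 (not_lt_of_gt l2)
      rw [hFcr, Finset.card_image_of_injOn hinj', card_lt_pairs]
    have hcardFin : FinE.card = 2 * d := by
      rw [hFinE, Finset.card_biUnion]
      · have : ∀ i ∈ D,
            (((Finset.univ.filter fun w : W => φ w = i).erase (c i)).image
              (fun x => s(c i, x))).card = 2 := by
          intro i hi
          have hinj' : Set.InjOn (fun x : W => s(c i, x))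
              ↑((Finset.univ.filter fun w : W => φ w = i).erase (c i)) := by
            intro x hx y hy hee
            rw [Finset.mem_coe, Finset.mem_erase] at hx hy
            rcases Sym2.eq_iff.1 hee with ⟨-, e2⟩ | ⟨e1, e2⟩
            · exact e2
            · exact absurd e2 hx.1
          have hmem : c i ∈ (Finset.univ.filter fun w : W => φ w = i) :=
            Finset.mem_filter.2 ⟨Finset.mem_univ _, hcD i hi⟩
          rw [Finset.card_image_of_injOn hinj', Finset.card_erase_of_mem hmem, hcard3 i hi]
        rw [Finset.sum_congr rfl this, Finset.sum_const, hD, smul_eq_mul, Nat.mul_comm]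
      · intro i hi j hj hij
        rw [Function.onFun, Finset.disjoint_left]
        intro e he he'
        rw [Finset.mem_image] at he he'
        obtain ⟨x, hx, hex⟩ := he
        obtain ⟨y, hy, hey⟩ := he'
        rw [Finset.mem_erase, Finset.mem_filter] at hx hy
        have hee : s(c i, x) = s(c j, y) := hex.trans hey.symm
        rcases Sym2.eq_iff.1 hee with ⟨e1, e2⟩ | ⟨e1, e2⟩
        · exact hij (by rw [← hcD i hi, e1, hcD j hj])
        · exact hij (by rw [← hcD i hi, e1, hy.2.2])
    rw [hedge, Set.ncard_coe_finset, Finset.card_union_of_disjoint hdisj, hcardFcr, hcardFin]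
    omega
  · -- clique numbers agree
    have hSH : H.IsNClique (cliqueNum G) S := by
      refine ⟨?_, hS.2⟩
      intro u hu v hv hne
      have hφ : φ u ≠ φ v := fun h => hne (hSinj u hu v hv h)
      have hadj : G.Adj u v := hS.1 hu hv hne
      refine ⟨hadj, ?_⟩
      rcases lt_trichotomy (φ u) (φ v) with hlt | heq | hgt
      · refine Or.inr (Or.inl ⟨hlt, ?_⟩)
        obtain ⟨h1, h2, h3, h4⟩ := hf (φ u) (φ v) hφ
        obtain ⟨p1S, p2S⟩ := h4 ⟨⟨u, hu, rfl⟩, ⟨v, hv, rfl⟩⟩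
        have e1 := hSinj _ p1S u hu (by rw [h1])
        have e2 := hSinj _ p2S v hv (by rw [h2])
        have : ((f (φ u) (φ v)).1, (f (φ u) (φ v)).2) = (u, v) := by rw [e1, e2]
        exact this.symm.trans rfl
      · exact absurd heq hφ
      · refine Or.inr (Or.inr ⟨hgt, ?_⟩)
        obtain ⟨h1, h2, h3, h4⟩ := hf (φ v) (φ u) (Ne.symm hφ)
        obtain ⟨p1S, p2S⟩ := h4 ⟨⟨v, hv, rfl⟩, ⟨u, hu, rfl⟩⟩
        have e1 := hSinj _ p1S v hv (by rw [h1])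
        have e2 := hSinj _ p2S u hu (by rw [h2])
        have : ((f (φ v) (φ u)).1, (f (φ v) (φ u)).2) = (v, u) := by rw [e1, e2]
        exact this.symm.trans rfl
    have hbdd : ∀ K : SimpleGraph W, BddAbove {k | ∃ T : Finset W, K.IsNClique k T} := by
      intro K
      refine ⟨Fintype.card W, ?_⟩
      rintro k ⟨T, hT⟩
      rw [← hT.2]
      exact Finset.card_le_card (Finset.subset_univ T)
    have hne0 : (0 : ℕ) ∈ {k | ∃ T : Finset W, H.IsNClique k T} :=
      ⟨∅, SimpleGraph.isNClique_empty.mpr rfl⟩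
    have hle : cliqueNum H ≤ cliqueNum G := by
      apply csSup_le_csSup (hbdd G) ⟨0, hne0⟩
      rintro k ⟨T, hT⟩
      exact ⟨T, ⟨fun a ha b hb hne => hHG (hT.1 ha hb hne), hT.2⟩⟩
    have hge : cliqueNum G ≤ cliqueNum H :=
      le_csSup (hbdd H) ⟨S, hSH⟩
    omega
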